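/- arXiv:1310.8453 — 10 statements merged into one kernel-verified Lean document; each statement's English description precedes it below -/
import Mathlib

section
/- Let V be an (r+1)-dimensional vector space over an algebraically closed field, V' ⊆ V a subspace, V_1 ⊆ V a subspace, and c_1 a nonnegative integer with r+1-c_1 > dim V_1. Then there exists a subspace V^1 ⊇ V_1 of codimension c_1 in V such that dim(V^1 ∩ V') = max{dim(V' ∩ V_1), dim V' − c_1}. -/
open Module

section Aux

variable {K V : Type*} [Field K] [AddCommGroup V] [Module K V] [FiniteDimensional K V]

lemma aux_finrank_sup_span (S : Submodule K V) (x : V) (hx : x ∉ S) :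
    finrank K ↥(S ⊔ K ∙ x) = finrank K S + 1 := by
  have hx0 : x ≠ 0 := fun h => hx (h ▸ S.zero_mem)
  have hdisj : Disjoint S (K ∙ x) := (Submodule.disjoint_span_singleton' hx0).2 hx
  have := Submodule.finrank_sup_add_finrank_inf_eq S (K ∙ x)
  rw [hdisj.eq_bot, finrank_bot, add_zero, finrank_span_singleton hx0] at this
  exact this

/-- grow a subspace inside `T` to any intermediate dimension -/
lemma aux_grow_in (T : Submodule K V) :
    ∀ (j : ℕ) (U : Submodule K V), U ≤ T → finrank K U + j ≤ finrank K T →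
      ∃ S : Submodule K V, U ≤ S ∧ S ≤ T ∧ finrank K S = finrank K U + j := by
  intro j
  induction j with
  | zero => exact fun U hUT _ => ⟨U, le_rfl, hUT, (add_zero _).symm⟩
  | succ j ih =>
    intro U hUT hle
    obtain ⟨S, hUS, hST, hS⟩ := ih U hUT (by omega)
    have hlt : S < T := by
      refine lt_of_le_of_ne hST fun hEq => ?_
      rw [hEq] at hS; omega
    obtain ⟨x, hxT, hxS⟩ := SetLike.exists_of_lt hlt
    refine ⟨S ⊔ K ∙ x, hUS.trans le_sup_left, sup_le hST ?_, ?_⟩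
    · rwa [Submodule.span_singleton_le_iff_mem]
    · rw [aux_finrank_sup_span S x hxS, hS]; omega

/-- grow a subspace outside `A ⊔ V'`, preserving the intersection with `V'` -/
lemma aux_grow_out (V' : Submodule K V) :
    ∀ (j : ℕ) (A : Submodule K V), finrank K ↥(A ⊔ V') + j ≤ finrank K V →
      ∃ W : Submodule K V, A ≤ W ∧ finrank K W = finrank K A + j ∧ W ⊓ V' = A ⊓ V' ∧
        finrank K ↥(W ⊔ V') = finrank K ↥(A ⊔ V') + j := by
  intro j
  induction j with
  | zero => exact fun A _ => ⟨A, le_rfl, (add_zero _).symm, rfl, (add_zero _).symm⟩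
  | succ j ih =>
    intro A hle
    obtain ⟨W, hAW, hW, hWV', hWsup⟩ := ih A (by omega)
    have hlt : W ⊔ V' < ⊤ := by
      refine lt_of_le_of_ne le_top fun hEq => ?_
      have := finrank_top K V
      rw [hEq] at hWsup; omega
    obtain ⟨x, -, hx⟩ := SetLike.exists_of_lt hlt
    have hxW : x ∉ W := fun hxW => hx (Submodule.mem_sup_left hxW)
    refine ⟨W ⊔ K ∙ x, hAW.trans le_sup_left, ?_, ?_, ?_⟩
    · rw [aux_finrank_sup_span W x hxW, hW]; omega
    · rw [← hWV']
      refine le_antisymm ?_ (le_inf (inf_le_left.trans le_sup_left) inf_le_right)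
      rintro y ⟨hy1, hy2⟩
      obtain ⟨w, hw, z, hz, rfl⟩ := Submodule.mem_sup.1 hy1
      obtain ⟨c, rfl⟩ := Submodule.mem_span_singleton.1 hz
      rcases eq_or_ne c 0 with rfl | hc
      · simpa using ⟨hw, by simpa using hy2⟩
      · exfalso
        apply hx
        have : c • x = (w + c • x) - w := by abel
        have hcx : c • x ∈ W ⊔ V' := by
          rw [this]
          exact sub_mem (Submodule.mem_sup_right hy2) (Submodule.mem_sup_left hw)
        have := (W ⊔ V').smul_mem c⁻¹ hcx
        rwa [inv_smul_smul₀ hc] at this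
    · have : (W ⊔ K ∙ x) ⊔ V' = (W ⊔ V') ⊔ K ∙ x := by
        rw [sup_right_comm]
      rw [this, aux_finrank_sup_span _ x hx, hWsup]; omega

end Aux

/-- for a subspace `V₁` of an `(r+1)`-dimensional space `V` with
`dim V₁ < r+1-c₁` and any subspace `V'`, there is a codimension-`c₁` subspace `V¹ ⊇ V₁`
with `dim (V¹ ⊓ V') = max (dim (V' ⊓ V₁)) (dim V' - c₁)`. -/
theorem exists_codim_subspace_min_intersection
    {K V : Type*} [Field K] [IsAlgClosed K] [AddCommGroup V] [Module K V]
    [FiniteDimensional K V] (r c₁ : ℕ) (hV : finrank K V = r + 1)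
    (V' V₁ : Submodule K V) (h : finrank K V₁ + c₁ < r + 1) :
    ∃ W : Submodule K V, V₁ ≤ W ∧ finrank K W + c₁ = r + 1 ∧
      finrank K ↥(W ⊓ V') = max (finrank K ↥(V' ⊓ V₁)) (finrank K V' - c₁) := by
  set a := finrank K ↥(V' ⊓ V₁) with ha
  set d' := finrank K V' with hd'
  set d₁ := finrank K V₁ with hd₁
  set m := max a (d' - c₁) with hm
  have ham : a ≤ m := le_max_left _ _
  have hdm : d' - c₁ ≤ m := le_max_right _ _
  have hmcases : m = a ∨ m = d' - c₁ := max_cases a (d' - c₁) |>.elim (fun h => Or.inl h.1)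
    (fun h => Or.inr h.1)
  have had' : a ≤ d' := Submodule.finrank_mono inf_le_left
  have had₁ : a ≤ d₁ := Submodule.finrank_mono inf_le_right
  have hd'n : d' ≤ r + 1 := hV ▸ Submodule.finrank_le V'
  -- find intermediate S with V' ⊓ V₁ ≤ S ≤ V', finrank S = m
  obtain ⟨S, hUS, hSV', hSrank⟩ := aux_grow_in V' (m - a) (V' ⊓ V₁) inf_le_left
    (by rw [← ha, ← hd']; omega)
  have hSm : finrank K S = m := by rw [hSrank, ← ha]; omega
  -- A = V₁ ⊔ S
  set A := V₁ ⊔ S with hA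
  have hAinf : A ⊓ V' = S := by
    refine le_antisymm ?_ (le_inf le_sup_right hSV')
    rintro y ⟨hy1, hy2⟩
    obtain ⟨v, hv, s, hs, rfl⟩ := Submodule.mem_sup.1 hy1
    have hvV' : v ∈ V' := by
      have : v = (v + s) - s := by abel
      rw [this]
      exact sub_mem hy2 (hSV' hs)
    exact S.add_mem (hUS ⟨hvV', hv⟩) hs
  have hV₁S : V₁ ⊓ S = V' ⊓ V₁ := by
    refine le_antisymm (fun y hy => ⟨hSV' hy.2, hy.1⟩) (fun y hy => ⟨hy.2, hUS hy⟩)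
  have hArank : finrank K ↥A + a = d₁ + m := by
    have := Submodule.finrank_sup_add_finrank_inf_eq V₁ S
    rw [hV₁S, hSm, ← ha, ← hd₁] at this
    exact this
  have hAsup : finrank K ↥(A ⊔ V') + m = finrank K ↥A + d' := by
    have := Submodule.finrank_sup_add_finrank_inf_eq A V'
    rw [hAinf, hSm, ← hd'] at this
    exact this
  have hAsupn : finrank K ↥(A ⊔ V') ≤ r + 1 := hV ▸ Submodule.finrank_le _
  -- grow A outside A ⊔ V'
  obtain ⟨W, hAW, hWrank, hWinf, -⟩ := aux_grow_out V' (r + 1 - c₁ - finrank K ↥A) A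
    (by rw [hV]; omega)
  refine ⟨W, le_sup_left.trans hAW, ?_, ?_⟩
  · rw [hWrank]; omega
  · rw [hWinf, hAinf, hSm, hm]
end

section
/- Let V be an (r+1)-dimensional vector space over an algebraically closed field, V' ⊆ V a fixed subspace, V_1,...,V_h subspaces of V, and c_1,...,c_h nonnegative integers such that for every subset I ⊆ {1,...,h}, r+1 − Σ_{i∈I} c_i > dim(∩_{i∈I} V_i). Then there exist subspaces V^i ⊇ V_i with codim V^i = c_i for each i, satisfying: (i) dim(∩_{i=1}^h V^i) = r+1 − Σ_{i=1}^h c_i, and (ii) dim((∩_{i=1}^h V^i) ∩ V') ≤ max_{I ⊆ [h]} { dim((∩_{i∈I} V_i) ∩ V') − Σ_{i∉I} c_i }. -/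
open Module

section Helpers
variable {K V : Type*} [Field K] [AddCommGroup V] [Module K V] [FiniteDimensional K V]

variable {K V : Type*} [Field K] [AddCommGroup V] [Module K V] [FiniteDimensional K V]

/-- Cutting with a hyperplane not containing `Z` drops `finrank Z` by exactly one. -/
lemma inf_hyperplane_finrank (H Z : Submodule K V)
    (hH : finrank K H + 1 = finrank K V) (hZ : ¬ Z ≤ H) :
    finrank K ↥(Z ⊓ H) + 1 = finrank K ↥Z := by
  have h1 := Submodule.finrank_sup_add_finrank_inf_eq Z H
  have h2 : finrank K ↥(Z ⊔ H) ≤ finrank K V := Submodule.finrank_le _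
  have h3 : finrank K ↥(Z ⊓ H) < finrank K ↥Z := by
    apply Submodule.finrank_lt_finrank_of_lt
    refine lt_of_le_of_ne inf_le_left fun he => hZ ?_
    rw [← he]; exact inf_le_right
  omega

/-- A hyperplane containing `A` and avoiding finitely many subspaces not contained in `A`. -/
lemma exists_avoiding_hyperplane [Infinite K] (A : Submodule K V) (hA : A ≠ ⊤)
    {ι : Type*} [Finite ι] (Z : ι → Submodule K V) :
    ∃ H : Submodule K V, A ≤ H ∧ finrank K ↥H + 1 = finrank K V ∧
      ∀ t, ¬ Z t ≤ A → ¬ Z t ≤ H := by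
  classical
  set Q := V ⧸ A
  have hnt : Nontrivial Q := Submodule.Quotient.nontrivial_iff.mpr hA
  -- choose witnesses
  have hch : ∀ t : {t : ι // ¬ Z t ≤ A}, ∃ z, z ∈ Z t.1 ∧ z ∉ A := by
    intro t
    obtain ⟨z, hz1, hz2⟩ := SetLike.not_le_iff_exists.mp t.2
    exact ⟨z, hz1, hz2⟩
  choose z hz1 hz2 using hch
  set w : {t : ι // ¬ Z t ≤ A} → Q := fun t => A.mkQ (z t)
  have hw : ∀ t, w t ≠ 0 := by
    intro t ht
    exact hz2 t ((Submodule.Quotient.mk_eq_zero A).mp ht)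
  -- proper subspaces of the dual
  set p : Option {t : ι // ¬ Z t ≤ A} → Subspace K (Module.Dual K Q) := fun o =>
    Option.rec ⊥ (fun t => LinearMap.ker (Module.Dual.eval K Q (w t))) o
  have hp : ∀ o, p o ≠ ⊤ := by
    rintro (_|t) h
    · exact bot_ne_top h
    · apply hw t
      rw [← Module.forall_dual_apply_eq_zero_iff K (w t)]
      intro φ
      have : φ ∈ LinearMap.ker (Module.Dual.eval K Q (w t)) :=
        Submodule.eq_top_iff'.mp h φ
      simpa using this
  have hfin : Finite {t : ι // ¬ Z t ≤ A} := Subtype.finite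
  have hfin2 : Finite (Option {t : ι // ¬ Z t ≤ A}) := Finite.of_equiv ({t : ι // ¬ Z t ≤ A} ⊕ PUnit.{1}) (Equiv.optionEquivSumPUnit _).symm
  have hne : (⋃ o, (p o : Set (Module.Dual K Q))) ≠ Set.univ := by
    intro hc
    obtain ⟨o, ho⟩ := Subspace.exists_eq_top_of_iUnion_eq_univ hc
    exact hp o ho
  obtain ⟨f, hf⟩ : ∃ f : Module.Dual K Q, ∀ o, f ∉ p o := by
    rw [Set.ne_univ_iff_exists_notMem] at hne
    obtain ⟨f, hf⟩ := hne
    exact ⟨f, fun o hfo => hf (Set.mem_iUnion.mpr ⟨o, hfo⟩)⟩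
  have hf0 : f ≠ 0 := fun h => hf none (by simp [p, h])
  have hfw : ∀ t, f (w t) ≠ 0 := by
    intro t ht
    exact hf (some t) (by simpa [p] using ht)
  set g : V →ₗ[K] K := f.comp A.mkQ
  refine ⟨LinearMap.ker g, ?_, ?_, ?_⟩
  · intro a ha
    have h0 : A.mkQ a = 0 := (Submodule.Quotient.mk_eq_zero A).mpr ha
    simp [g, LinearMap.mem_ker, h0]
  · have hrk := g.finrank_range_add_finrank_ker
    have hg0 : g ≠ 0 := by
      obtain ⟨x, hx⟩ : ∃ x : Q, f x ≠ 0 := by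
        by_contra hc
        push_neg at hc
        exact hf0 (LinearMap.ext fun x => hc x)
      obtain ⟨v, rfl⟩ := Submodule.mkQ_surjective A x
      intro h
      apply hx
      have : g v = 0 := by rw [h]; rfl
      exact this
    have hr1 : finrank K ↥(LinearMap.range g) = 1 := by
      have hle : finrank K ↥(LinearMap.range g) ≤ 1 := by
        simpa using Submodule.finrank_le (LinearMap.range g)
      have hpos : finrank K ↥(LinearMap.range g) ≠ 0 := fun h0 =>
        hg0 (LinearMap.range_eq_bot.mp (Submodule.finrank_eq_zero.mp h0))
      omega
    omega
  · rintro t hZt hle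
    have : z ⟨t, hZt⟩ ∈ LinearMap.ker g := hle (hz1 ⟨t, hZt⟩)
    exact hfw ⟨t, hZt⟩ (by simpa [g] using this)


variable {K V : Type*} [Field K] [AddCommGroup V] [Module K V] [FiniteDimensional K V]

theorem aux_fundamental [Infinite K] (r h : ℕ) (hV : finrank K V = r + 1)
    (V' : Submodule K V) (Vs : Fin h → Submodule K V) :
    ∀ (n : ℕ) (c : Fin h → ℕ), (∑ i, c i = n) →
    (∀ I : Finset (Fin h), I.Nonempty →
      finrank K ↥(⨅ i ∈ I, Vs i) + ∑ i ∈ I, c i < r + 1) →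
    ∃ W : Fin h → Submodule K V,
      (∀ i, Vs i ≤ W i) ∧
      (∀ i, finrank K ↥(W i) + c i = r + 1) ∧
      (finrank K ↥(⨅ i, W i) + ∑ i, c i = r + 1) ∧
      ∀ (J : Finset (Fin h)) (U : Submodule K V), (U = ⊤ ∨ U = V') →
        ∃ I : Finset (Fin h), J ⊆ I ∧
          (finrank K ↥((⨅ i, W i) ⊓ (⨅ i ∈ J, Vs i) ⊓ U) : ℤ) ≤
            (finrank K ↥((⨅ i ∈ I, Vs i) ⊓ U) : ℤ) - ∑ i ∈ Iᶜ, (c i : ℤ) := by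
  intro n
  induction n with
  | zero =>
    intro c hsum hyp
    have hc : ∀ i, c i = 0 := fun i =>
      Finset.sum_eq_zero_iff.mp hsum i (Finset.mem_univ i)
    have htop : (⨅ _i : Fin h, (⊤ : Submodule K V)) = ⊤ := by simp
    refine ⟨fun _ => ⊤, fun i => le_top, ?_, ?_, ?_⟩
    · intro i; simp [hc i, hV, finrank_top]
    · rw [htop, hsum]; simp [hV, finrank_top]
    · intro J U hU
      refine ⟨J, subset_rfl, ?_⟩
      have h2 : ∑ i ∈ Jᶜ, (c i : ℤ) = 0 :=
        Finset.sum_eq_zero fun i _ => by simp [hc i]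
      rw [htop, top_inf_eq, h2, sub_zero]
  | succ n IH =>
    intro c hsum hyp
    classical
    obtain ⟨j, -, hj⟩ := Finset.exists_ne_zero_of_sum_ne_zero (by omega : ∑ i, c i ≠ 0)
    have hcj1 : 1 ≤ c j := Nat.one_le_iff_ne_zero.mpr hj
    set c' : Fin h → ℕ := Function.update c j (c j - 1) with hc'def
    have hc'j : c' j = c j - 1 := Function.update_self j (c j - 1) c
    have hc'ne : ∀ i, i ≠ j → c' i = c i := fun i hi => Function.update_of_ne hi (c j - 1) c
    have hcompl : ∀ (s : Finset (Fin h)), j ∈ s → ∑ i ∈ s, c' i + 1 = ∑ i ∈ s, c i := by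
      intro s hjs
      have e1 := Finset.sum_update_of_mem hjs c (c j - 1)
      rw [Finset.sdiff_singleton_eq_erase] at e1
      have e2 := Finset.add_sum_erase s c hjs
      rw [← hc'def] at e1
      omega
    have hsum' : ∑ i, c' i = n := by
      have := hcompl Finset.univ (Finset.mem_univ j)
      omega
    have hc'le : ∀ i, c' i ≤ c i := by
      intro i
      by_cases hi : i = j
      · subst hi; omega
      · rw [hc'ne i hi]
    have hyp' : ∀ I : Finset (Fin h), I.Nonempty →
        finrank K ↥(⨅ i ∈ I, Vs i) + ∑ i ∈ I, c' i < r + 1 := by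
      intro I hI
      have := hyp I hI
      have hle : ∑ i ∈ I, c' i ≤ ∑ i ∈ I, c i := Finset.sum_le_sum fun i _ => hc'le i
      omega
    obtain ⟨W', h1', h2', h3', h4'⟩ := IH c' hsum' hyp'
    -- singleton infimum
    have hXj : (⨅ i ∈ ({j} : Finset (Fin h)), Vs i) = Vs j := by simp
    -- Vs j is proper
    have hypj := hyp {j} ⟨j, Finset.mem_singleton_self j⟩
    rw [hXj, Finset.sum_singleton] at hypj
    have hVsjtop : Vs j ≠ ⊤ := by
      intro hT
      rw [hT, finrank_top, hV] at hypj
      omega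
    -- W' j is not inside Vs j
    have hW'jVsj : ¬ W' j ≤ Vs j := by
      intro hle
      have hm := Submodule.finrank_mono hle
      have := h2' j
      omega
    -- ⨅ W' is not inside Vs j
    have hMVsj : ¬ (⨅ i, W' i) ≤ Vs j := by
      intro hle
      obtain ⟨I₀, hjI₀, hb₀⟩ := h4' {j} ⊤ (Or.inl rfl)
      have hjm : j ∈ I₀ := hjI₀ (Finset.mem_singleton_self j)
      rw [hXj, inf_top_eq, inf_top_eq, inf_eq_left.mpr hle] at hb₀
      have hy := hyp I₀ ⟨j, hjm⟩
      have hsumeq : ∑ i ∈ I₀ᶜ, (c' i : ℤ) = ∑ i ∈ I₀ᶜ, (c i : ℤ) :=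
        Finset.sum_congr rfl fun i hi => by
          have : i ≠ j := fun hij => (Finset.mem_compl.mp hi) (hij ▸ hjm)
          rw [hc'ne i this]
      have hsplit := Finset.sum_add_sum_compl I₀ c
      have hy2 : (finrank K ↥(⨅ i ∈ I₀, Vs i) : ℤ) + ∑ i ∈ I₀, (c i : ℤ) < (r : ℤ) + 1 := by
        exact_mod_cast hy
      have hsplit2 : ∑ i ∈ I₀, (c i : ℤ) + ∑ i ∈ I₀ᶜ, (c i : ℤ) = (n : ℤ) + 1 := by
        rw [← Nat.cast_sum, ← Nat.cast_sum, ← Nat.cast_add, hsplit, hsum]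
        push_cast; ring
      have h3'' : (finrank K ↥(⨅ i, W' i) : ℤ) + (n : ℤ) = (r : ℤ) + 1 := by
        exact_mod_cast (by omega : finrank K ↥(⨅ i, W' i) + n = r + 1)
      rw [hsumeq] at hb₀
      omega
    -- generic hyperplane
    obtain ⟨H, hAH, hHrk, havoid⟩ := exists_avoiding_hyperplane (Vs j) hVsjtop
      (fun o : Option (Finset (Fin h) × Bool) =>
        Option.rec (W' j)
          (fun Jb => (⨅ i, W' i) ⊓ (⨅ i ∈ Jb.1, Vs i) ⊓ (cond Jb.2 ⊤ V')) o)
    have keyW : ¬ W' j ≤ Vs j → ¬ W' j ≤ H := havoid none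
    have key : ∀ (J : Finset (Fin h)) (b : Bool),
        ¬ ((⨅ i, W' i) ⊓ (⨅ i ∈ J, Vs i) ⊓ (cond b ⊤ V')) ≤ Vs j →
        ¬ ((⨅ i, W' i) ⊓ (⨅ i ∈ J, Vs i) ⊓ (cond b ⊤ V')) ≤ H :=
      fun J b => havoid (some (J, b))
    have hMH : ¬ (⨅ i, W' i) ≤ H := by
      have h0 : (⨅ i, W' i) ⊓ (⨅ i ∈ (∅ : Finset (Fin h)), Vs i) ⊓
          (cond true ⊤ V' : Submodule K V) = ⨅ i, W' i := by simp
      have := key ∅ true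
      rw [h0] at this
      exact this hMVsj
    set W : Fin h → Submodule K V := Function.update W' j (W' j ⊓ H) with hWdef
    have hWj : W j = W' j ⊓ H := Function.update_self j _ W'
    have hWne : ∀ i, i ≠ j → W i = W' i := fun i hi => Function.update_of_ne hi _ W'
    have hMW : (⨅ i, W i) = (⨅ i, W' i) ⊓ H := by
      apply le_antisymm
      · refine le_inf (le_iInf fun i => ?_) ((iInf_le _ j).trans ?_)
        · by_cases hi : i = j
          · rw [hi]
            exact (iInf_le _ j).trans (by rw [hWj]; exact inf_le_left)
          · exact (iInf_le _ i).trans (by rw [hWne i hi])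
        · rw [hWj]; exact inf_le_right
      · refine le_iInf fun i => ?_
        by_cases hi : i = j
        · rw [hi, hWj]
          exact le_inf (inf_le_left.trans (iInf_le _ j)) inf_le_right
        · rw [hWne i hi]
          exact inf_le_left.trans (iInf_le _ i)
    refine ⟨W, ?_, ?_, ?_, ?_⟩
    · intro i
      by_cases hi : i = j
      · rw [hi, hWj]; exact le_inf (h1' j) hAH
      · rw [hWne i hi]; exact h1' i
    · intro i
      by_cases hi : i = j
      · rw [hi, hWj]
        have hd := inf_hyperplane_finrank H (W' j) hHrk (keyW hW'jVsj)
        have := h2' j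
        omega
      · rw [hWne i hi]
        have := h2' i
        have := hc'ne i hi
        omega
    · rw [hMW]
      have hd := inf_hyperplane_finrank H (⨅ i, W' i) hHrk hMH
      omega
    · intro J U hU
      obtain ⟨I', hJI', hbd⟩ := h4' J U hU
      have hQ : (⨅ i, W i) ⊓ (⨅ i ∈ J, Vs i) ⊓ U =
          ((⨅ i, W' i) ⊓ (⨅ i ∈ J, Vs i) ⊓ U) ⊓ H := by
        rw [hMW, inf_right_comm (⨅ i, W' i) H, inf_right_comm _ H U]
      have hQle : finrank K ↥((⨅ i, W i) ⊓ (⨅ i ∈ J, Vs i) ⊓ U) ≤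
          finrank K ↥((⨅ i, W' i) ⊓ (⨅ i ∈ J, Vs i) ⊓ U) := by
        rw [hQ]; exact Submodule.finrank_mono inf_le_left
      by_cases hjI' : j ∈ I'
      · refine ⟨I', hJI', ?_⟩
        have hsumeq : ∑ i ∈ I'ᶜ, (c' i : ℤ) = ∑ i ∈ I'ᶜ, (c i : ℤ) :=
          Finset.sum_congr rfl fun i hi => by
            have : i ≠ j := fun hij => (Finset.mem_compl.mp hi) (hij ▸ hjI')
            rw [hc'ne i this]
        rw [hsumeq] at hbd
        have := (Nat.cast_le (α := ℤ)).mpr hQle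
        omega
      · by_cases hZVs : ((⨅ i, W' i) ⊓ (⨅ i ∈ J, Vs i) ⊓ U) ≤ Vs j
        · obtain ⟨I₁, hins, hbd₁⟩ := h4' (insert j J) U hU
          have hjI₁ : j ∈ I₁ := hins (Finset.mem_insert_self j J)
          refine ⟨I₁, (Finset.subset_insert j J).trans hins, ?_⟩
          have hXins : (⨅ i ∈ insert j J, Vs i) = Vs j ⊓ (⨅ i ∈ J, Vs i) :=
            Finset.iInf_insert j J Vs
          have hEq : (⨅ i, W' i) ⊓ (⨅ i ∈ insert j J, Vs i) ⊓ U =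
              (⨅ i, W' i) ⊓ (⨅ i ∈ J, Vs i) ⊓ U := by
            rw [hXins, inf_comm (Vs j), ← inf_assoc, inf_right_comm]
            exact inf_eq_left.mpr hZVs
          rw [hEq] at hbd₁
          have hsumeq : ∑ i ∈ I₁ᶜ, (c' i : ℤ) = ∑ i ∈ I₁ᶜ, (c i : ℤ) :=
            Finset.sum_congr rfl fun i hi => by
              have : i ≠ j := fun hij => (Finset.mem_compl.mp hi) (hij ▸ hjI₁)
              rw [hc'ne i this]
          rw [hsumeq] at hbd₁
          have := (Nat.cast_le (α := ℤ)).mpr hQle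
          omega
        · have hZH : ¬ ((⨅ i, W' i) ⊓ (⨅ i ∈ J, Vs i) ⊓ U) ≤ H := by
            obtain ⟨b, hb⟩ : ∃ b : Bool, (cond b ⊤ V' : Submodule K V) = U := by
              rcases hU with rfl | rfl
              exacts [⟨true, rfl⟩, ⟨false, rfl⟩]
            have := key J b
            rw [hb] at this
            exact this hZVs
          have hdrop := inf_hyperplane_finrank H _ hHrk hZH
          refine ⟨I', hJI', ?_⟩
          have hjc : j ∈ I'ᶜ := Finset.mem_compl.mpr hjI'
          have hsumZ : ∑ i ∈ I'ᶜ, (c' i : ℤ) + 1 = ∑ i ∈ I'ᶜ, (c i : ℤ) := by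
            exact_mod_cast hcompl I'ᶜ hjc
          rw [hQ]
          omega

end Helpers

/-- Lemma `fundamental`: given subspaces `V₁,…,V_h` of an `(r+1)`-dimensional
space `V`, a subspace `V'`, and nonnegative integers `c₁,…,c_h` with
`r+1 - ∑_{i∈I} cᵢ > dim (⋂_{i∈I} Vᵢ)` for every (nonempty) `I ⊆ [h]`, there exist subspaces
`Vⁱ ⊇ Vᵢ` of codimension `cᵢ` such that
(i) `dim (⋂ᵢ Vⁱ) = r+1 - ∑ᵢ cᵢ`, and
(ii) `dim ((⋂ᵢ Vⁱ) ⊓ V') ≤ max_{I⊆[h]} (dim ((⋂_{i∈I} Vᵢ) ⊓ V') - ∑_{i∉I} cᵢ)`. -/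
theorem exists_codim_system_min_intersection
    {K V : Type*} [Field K] [IsAlgClosed K] [AddCommGroup V] [Module K V]
    [FiniteDimensional K V] (r h : ℕ) (hV : finrank K V = r + 1)
    (V' : Submodule K V) (Vs : Fin h → Submodule K V) (c : Fin h → ℕ)
    (hyp : ∀ I : Finset (Fin h), I.Nonempty →
      finrank K ↥(⨅ i ∈ I, Vs i) + ∑ i ∈ I, c i < r + 1) :
    ∃ W : Fin h → Submodule K V,
      (∀ i, Vs i ≤ W i) ∧
      (∀ i, finrank K ↥(W i) + c i = r + 1) ∧
      finrank K ↥(⨅ i, W i) + ∑ i, c i = r + 1 ∧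
      ∃ I : Finset (Fin h),
        (finrank K ↥((⨅ i, W i) ⊓ V') : ℤ) ≤
          (finrank K ↥((⨅ i ∈ I, Vs i) ⊓ V') : ℤ) - ∑ i ∈ Iᶜ, (c i : ℤ) := by
  obtain ⟨W, hW1, hW2, hW3, hW4⟩ := aux_fundamental r h hV V' Vs (∑ i, c i) c rfl hyp
  refine ⟨W, hW1, hW2, hW3, ?_⟩
  obtain ⟨I, -, hb⟩ := hW4 ∅ V' (Or.inr rfl)
  refine ⟨I, ?_⟩
  have he : (⨅ i ∈ (∅ : Finset (Fin h)), Vs i) = (⊤ : Submodule K V) := by simp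
  rw [he, inf_top_eq] at hb
  exact hb
end

section
/- Let V be an (r+1)-dimensional vector space over an algebraically closed field and V_1,...,V_n subspaces. Let (c_1,...,c_n) be nonnegative integers such that there exists I ⊆ [n] with |I| ≥ 2 minimal with the property r+1 − Σ_{i∈I} c_i ≤ dim(∩_{i∈I} V_i) (i.e., every proper subset I'' ⊊ I satisfies r+1 − Σ_{i∈I''} c_i > dim(∩_{i∈I''} V_i)). Then there exist subspaces V^i ⊇ V_i with codim V^i = c_i for all i ∈ I such that dim(∩_{i∈I} V^i) = dim(∩_{i∈I} V_i). -/
open Module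

section Aux

variable {K V : Type*} [Field K] [AddCommGroup V] [Module K V] [FiniteDimensional K V]

omit [FiniteDimensional K V] in
private lemma my_inf_sup_span_eq {A R : Submodule K V} {v : V} (hv : v ∉ A ⊔ R) :
    (A ⊔ K ∙ v) ⊓ R = A ⊓ R := by
  refine le_antisymm ?_ (inf_le_inf_right R le_sup_left)
  rintro x hx
  obtain ⟨hx1, hx2⟩ := Submodule.mem_inf.mp hx
  obtain ⟨y, hy, z, hz, hyz⟩ := Submodule.mem_sup.mp hx1
  obtain ⟨a, rfl⟩ := Submodule.mem_span_singleton.mp hz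
  by_cases ha : a = 0
  · subst ha
    rw [zero_smul, add_zero] at hyz
    exact Submodule.mem_inf.mpr ⟨hyz ▸ hy, hx2⟩
  · exfalso
    apply hv
    have hxy : x - y ∈ A ⊔ R :=
      Submodule.sub_mem _ (Submodule.mem_sup_right hx2) (Submodule.mem_sup_left hy)
    have : a • v = x - y := by rw [← hyz]; abel
    have hv' : v = a⁻¹ • (x - y) := by rw [← this, smul_smul, inv_mul_cancel₀ ha, one_smul]
    rw [hv']
    exact Submodule.smul_mem _ _ hxy

private lemma my_finrank_sup_span {A : Submodule K V} {v : V} (hv : v ∉ A) :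
    finrank K ↥(A ⊔ K ∙ v) = finrank K ↥A + 1 := by
  have h0 : v ≠ 0 := fun h => hv (h ▸ A.zero_mem)
  have hd : A ⊓ (K ∙ v) = ⊥ := by
    rw [eq_bot_iff]
    rintro x hx
    obtain ⟨hx1, hx2⟩ := Submodule.mem_inf.mp hx
    obtain ⟨a, rfl⟩ := Submodule.mem_span_singleton.mp hx2
    by_cases ha : a = 0
    · simp [ha]
    · exfalso
      apply hv
      have h2 := A.smul_mem a⁻¹ hx1
      rwa [smul_smul, inv_mul_cancel₀ ha, one_smul] at h2
  have h := Submodule.finrank_sup_add_finrank_inf_eq A (K ∙ v)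
  rw [hd, finrank_bot, finrank_span_singleton h0] at h
  omega

private lemma my_aux [Infinite K] (r n : ℕ) (hV : finrank K V = r + 1)
    (Vs : Fin n → Submodule K V) (c : Fin n → ℕ) (I : Finset (Fin n)) :
    ∀ N (U : Fin n → Submodule K V),
      (∀ i ∈ I, finrank K ↥(U i) + c i ≤ r + 1) →
      ((r + 1) * I.card ≤ ∑ i ∈ I, (finrank K ↥(U i) + c i) + N) →
      (∀ S ⊆ I, ∃ J ⊆ S, finrank K ↥(⨅ j ∈ S, U j) + (S \ J).card * (r + 1) ≤
        finrank K ↥(⨅ j ∈ J, Vs j) + ∑ j ∈ S \ J, finrank K ↥(U j)) →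
      ∃ W : Fin n → Submodule K V,
        (∀ i ∈ I, U i ≤ W i) ∧ (∀ i ∈ I, finrank K ↥(W i) + c i = r + 1) ∧
        (∀ S ⊆ I, ∃ J ⊆ S, finrank K ↥(⨅ j ∈ S, W j) + (S \ J).card * (r + 1) ≤
          finrank K ↥(⨅ j ∈ J, Vs j) + ∑ j ∈ S \ J, finrank K ↥(W j)) := by
  intro N
  induction N with
  | zero =>
    intro U hle hsum hinv
    refine ⟨U, fun i _ => le_rfl, ?_, hinv⟩
    by_contra hall
    push_neg at hall
    obtain ⟨i, hiI, hne⟩ := hall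
    have hstrict : ∑ j ∈ I, (finrank K ↥(U j) + c j) < ∑ _j ∈ I, (r + 1) :=
      Finset.sum_lt_sum (fun j hj => hle j hj) ⟨i, hiI, lt_of_le_of_ne (hle i hiI) hne⟩
    rw [Finset.sum_const, smul_eq_mul] at hstrict
    have hcomm : I.card * (r + 1) = (r + 1) * I.card := Nat.mul_comm _ _
    omega
  | succ N ih =>
    intro U hle hsum hinv
    classical
    by_cases hall : ∀ i ∈ I, finrank K ↥(U i) + c i = r + 1
    · exact ⟨U, fun i _ => le_rfl, hall, hinv⟩
    push_neg at hall
    obtain ⟨i, hiI, hne⟩ := hall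
    have hlt : finrank K ↥(U i) + c i ≤ r := by
      have := hle i hiI; omega
    have hUiTop : U i ≠ ⊤ := by
      intro h
      rw [h, finrank_top, hV] at hlt
      omega
    -- the finite set of proper subspaces to avoid
    set 𝒮 : Finset (Submodule K V) :=
      (insert (U i) ((I.powerset.filter fun S => i ∈ S).image
        fun S => U i ⊔ ⨅ j ∈ S.erase i, U j)).erase ⊤ with h𝒮
    have hTop𝒮 : (⊤ : Submodule K V) ∉ 𝒮 := by
      rw [h𝒮]; exact Finset.notMem_erase _ _
    obtain ⟨v, hv⟩ : ∃ v : V, ∀ p ∈ 𝒮, v ∉ p := by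
      have hne := Subspace.biUnion_ne_univ_of_top_notMem hTop𝒮
      obtain ⟨v, hv⟩ := Set.ne_univ_iff_exists_notMem _ |>.mp hne
      refine ⟨v, fun p hp hvp => hv ?_⟩
      exact Set.mem_biUnion hp hvp
    have hvUi : v ∉ U i := hv (U i) (Finset.mem_erase.mpr ⟨hUiTop, Finset.mem_insert_self _ _⟩)
    set U' : Fin n → Submodule K V := Function.update U i (U i ⊔ K ∙ v) with hU'
    have hU'i : U' i = U i ⊔ K ∙ v := Function.update_self _ _ _
    have hU'j : ∀ j, j ≠ i → U' j = U j := fun j hj => Function.update_of_ne hj _ _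
    have hmono : ∀ j, U j ≤ U' j := by
      intro j
      by_cases hji : j = i
      · subst hji; rw [hU'i]; exact le_sup_left
      · rw [hU'j j hji]
    have hrank : finrank K ↥(U' i) = finrank K ↥(U i) + 1 := by
      rw [hU'i]; exact my_finrank_sup_span hvUi
    have hle' : ∀ j ∈ I, finrank K ↥(U' j) + c j ≤ r + 1 := by
      intro j hj
      by_cases hji : j = i
      · subst hji; rw [hrank]; omega
      · rw [hU'j j hji]; exact hle j hj
    have hsum' : ∑ j ∈ I, (finrank K ↥(U' j) + c j)
        = ∑ j ∈ I, (finrank K ↥(U j) + c j) + 1 := by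
      rw [← Finset.add_sum_erase _ _ hiI, ← Finset.add_sum_erase _ (fun j => finrank K ↥(U j) + c j) hiI]
      rw [Finset.sum_congr rfl fun j hj => by rw [hU'j j (Finset.ne_of_mem_erase hj)]]
      rw [hrank]; ring
    have hinv' : ∀ S ⊆ I, ∃ J ⊆ S, finrank K ↥(⨅ j ∈ S, U' j) + (S \ J).card * (r + 1) ≤
        finrank K ↥(⨅ j ∈ J, Vs j) + ∑ j ∈ S \ J, finrank K ↥(U' j) := by
      intro S hSI
      by_cases hiS : i ∈ S
      · -- i ∈ S
        have hRS : ⨅ j ∈ S.erase i, U' j = ⨅ j ∈ S.erase i, U j :=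
          biInf_congr fun j hj => hU'j j (Finset.ne_of_mem_erase hj)
        have hSdec : ⨅ j ∈ S, U' j = (U i ⊔ K ∙ v) ⊓ ⨅ j ∈ S.erase i, U j := by
          conv_lhs => rw [← Finset.insert_erase hiS]
          rw [Finset.iInf_insert, hU'i, hRS]
        by_cases htop : U i ⊔ ⨅ j ∈ S.erase i, U j = ⊤
        · -- forced case
          have hSeI : S.erase i ⊆ I := (Finset.erase_subset i S).trans hSI
          obtain ⟨J, hJSe, hJ⟩ := hinv (S.erase i) hSeI
          refine ⟨J, hJSe.trans (Finset.erase_subset i S), ?_⟩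
          have hiJ : i ∉ J := fun h => (Finset.ne_of_mem_erase (hJSe h)) rfl
          have hsup : (U i ⊔ K ∙ v) ⊔ ⨅ j ∈ S.erase i, U j = ⊤ := by
            rw [eq_top_iff, ← htop]
            exact sup_le_sup_right le_sup_left _
          have hdim : finrank K ↥(⨅ j ∈ S, U' j) + (r + 1)
              = finrank K ↥(U' i) + finrank K ↥(⨅ j ∈ S.erase i, U j) := by
            have h := Submodule.finrank_sup_add_finrank_inf_eq (U i ⊔ K ∙ v) (⨅ j ∈ S.erase i, U j)
            rw [hsup, finrank_top, hV] at h
            rw [hSdec, hU'i]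
            omega
          have hSJ : S \ J = insert i (S.erase i \ J) := by
            rw [Finset.erase_sdiff_comm, Finset.insert_erase
              (Finset.mem_sdiff.mpr ⟨hiS, hiJ⟩)]
          have hiSe : i ∉ S.erase i \ J := fun h =>
            (Finset.ne_of_mem_erase (Finset.mem_sdiff.mp h).1) rfl
          have hcard : (S \ J).card = (S.erase i \ J).card + 1 := by
            rw [hSJ, Finset.card_insert_of_notMem hiSe]
          have hsumS : ∑ j ∈ S \ J, finrank K ↥(U' j)
              = finrank K ↥(U' i) + ∑ j ∈ S.erase i \ J, finrank K ↥(U j) := by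
            rw [hSJ, Finset.sum_insert hiSe]
            congr 1
            exact Finset.sum_congr rfl fun j hj => by
              rw [hU'j j (Finset.ne_of_mem_erase (Finset.mem_sdiff.mp hj).1)]
          rw [hcard, hsumS]
          have hm : ((S.erase i \ J).card + 1) * (r + 1)
              = (S.erase i \ J).card * (r + 1) + (r + 1) := by ring
          omega
        · -- generic case: v avoids U i ⊔ R
          have hmem𝒮 : U i ⊔ ⨅ j ∈ S.erase i, U j ∈ 𝒮 := by
            rw [h𝒮]
            refine Finset.mem_erase.mpr ⟨htop, Finset.mem_insert.mpr (Or.inr ?_)⟩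
            exact Finset.mem_image.mpr ⟨S, Finset.mem_filter.mpr
              ⟨Finset.mem_powerset.mpr hSI, hiS⟩, rfl⟩
          have hvnot : v ∉ U i ⊔ ⨅ j ∈ S.erase i, U j := hv _ hmem𝒮
          have hSeq : ⨅ j ∈ S, U' j = ⨅ j ∈ S, U j := by
            rw [hSdec, my_inf_sup_span_eq hvnot]
            conv_rhs => rw [← Finset.insert_erase hiS]
            rw [Finset.iInf_insert]
          obtain ⟨J, hJS, hJ⟩ := hinv S hSI
          refine ⟨J, hJS, ?_⟩
          rw [hSeq]
          refine hJ.trans (add_le_add_right (Finset.sum_le_sum fun j _ => ?_) _)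
          exact Submodule.finrank_mono (hmono j)
      · -- i ∉ S
        obtain ⟨J, hJS, hJ⟩ := hinv S hSI
        refine ⟨J, hJS, ?_⟩
        have h1 : ⨅ j ∈ S, U' j = ⨅ j ∈ S, U j :=
          biInf_congr fun j hj => hU'j j fun h => hiS (h ▸ hj)
        have h2 : ∑ j ∈ S \ J, finrank K ↥(U' j) = ∑ j ∈ S \ J, finrank K ↥(U j) :=
          Finset.sum_congr rfl fun j hj => by
            rw [hU'j j fun h => hiS (h ▸ (Finset.mem_sdiff.mp hj).1)]
        rw [h1, h2]
        exact hJ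
    obtain ⟨W, hUW, hWr, hWinv⟩ := ih U' hle' (by omega) hinv'
    exact ⟨W, fun j hj => (hmono j).trans (hUW j hj), hWr, hWinv⟩

end Aux

/-- if `I ⊆ [n]` with `|I| ≥ 2` is minimal with the property
`r+1 - ∑_{i∈I} cᵢ ≤ dim (⋂_{i∈I} Vᵢ)` (i.e. every nonempty proper subset `I''` satisfies the
strict reverse inequality), then there are subspaces `Vⁱ ⊇ Vᵢ` of codimension `cᵢ` for `i ∈ I`
with `dim (⋂_{i∈I} Vⁱ) = dim (⋂_{i∈I} Vᵢ)`. -/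
theorem exists_codim_system_preserving_intersection
    {K V : Type*} [Field K] [IsAlgClosed K] [AddCommGroup V] [Module K V]
    [FiniteDimensional K V] (r n : ℕ) (hV : finrank K V = r + 1)
    (Vs : Fin n → Submodule K V) (c : Fin n → ℕ) (I : Finset (Fin n))
    (hcard : 2 ≤ I.card)
    (hI : r + 1 ≤ ∑ i ∈ I, c i + finrank K ↥(⨅ i ∈ I, Vs i))
    (hmin : ∀ I'' ⊂ I, I''.Nonempty →
      finrank K ↥(⨅ i ∈ I'', Vs i) + ∑ i ∈ I'', c i < r + 1) :
    ∃ W : Fin n → Submodule K V,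
      (∀ i ∈ I, Vs i ≤ W i) ∧
      (∀ i ∈ I, finrank K ↥(W i) + c i = r + 1) ∧
      finrank K ↥(⨅ i ∈ I, W i) = finrank K ↥(⨅ i ∈ I, Vs i) := by
  have hle0 : ∀ i ∈ I, finrank K ↥(Vs i) + c i ≤ r + 1 := by
    intro i hi
    obtain ⟨a, ha, b, hb, hab⟩ := Finset.one_lt_card.mp (by omega : 1 < I.card)
    have hj : ∃ j ∈ I, j ≠ i := by
      by_cases hai : a = i
      · exact ⟨b, hb, fun h => hab (hai.trans h.symm)⟩
      · exact ⟨a, ha, hai⟩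
    obtain ⟨j, hjI, hji⟩ := hj
    have hss : ({i} : Finset (Fin n)) ⊂ I := by
      refine Finset.ssubset_iff_of_subset (Finset.singleton_subset_iff.mpr hi) |>.mpr ?_
      exact ⟨j, hjI, by simp [hji]⟩
    have h1 := hmin {i} hss ⟨i, Finset.mem_singleton_self i⟩
    have h2 : (⨅ j ∈ ({i} : Finset (Fin n)), Vs j) = Vs i := by simp
    rw [h2, Finset.sum_singleton] at h1
    omega
  obtain ⟨W, hVW, hWr, hWinv⟩ := my_aux r n hV Vs c I ((r + 1) * I.card) Vs hle0
    (by omega)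
    (fun S _ => ⟨S, le_rfl, by simp⟩)
  refine ⟨W, hVW, hWr, ?_⟩
  have hge : finrank K ↥(⨅ i ∈ I, Vs i) ≤ finrank K ↥(⨅ i ∈ I, W i) := by
    apply Submodule.finrank_mono
    exact le_iInf₂ fun i hi => (iInf₂_le i hi).trans (hVW i hi)
  have hle : finrank K ↥(⨅ i ∈ I, W i) ≤ finrank K ↥(⨅ i ∈ I, Vs i) := by
    obtain ⟨J, hJI, hJ⟩ := hWinv I (le_refl I)
    have hsumW : ∑ j ∈ I \ J, finrank K ↥(W j) + ∑ j ∈ I \ J, c j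
        = (I \ J).card * (r + 1) := by
      rw [← Finset.sum_add_distrib]
      rw [Finset.sum_congr rfl fun j hj => hWr j (Finset.mem_sdiff.mp hj).1]
      rw [Finset.sum_const, smul_eq_mul]
    have key : finrank K ↥(⨅ i ∈ I, W i) + ∑ j ∈ I \ J, c j
        ≤ finrank K ↥(⨅ j ∈ J, Vs j) := by omega
    have hsplit : ∑ j ∈ I \ J, c j + ∑ j ∈ J, c j = ∑ j ∈ I, c j :=
      Finset.sum_sdiff hJI
    rcases eq_or_ne J I with rfl | hJne
    · simpa using key
    rcases Finset.eq_empty_or_nonempty J with rfl | hJnonempty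
    · have hIempty : I \ ∅ = I := by simp
      rw [hIempty] at key
      have h3 : (⨅ j ∈ (∅ : Finset (Fin n)), Vs j) = ⊤ := by simp
      rw [h3] at key
      have h4 : finrank K ↥(⊤ : Submodule K V) = r + 1 := by rw [finrank_top, hV]
      omega
    · have hmin' := hmin J (lt_of_le_of_ne hJI hJne) hJnonempty
      omega
  omega
end

section
/- Let V be a finite-dimensional vector space with subspaces V_1,...,V_n satisfying ∩_{i=1}^n V_i = {0}, and suppose W_1,...,W_n are subspaces with V_i ⊂ W_i, dim W_i = dim V_i + 1, and ∩_{i∈I} W_i ⊋ ∩_{i∈I} V_i for every nonempty I ⊆ [n]. Then there exists a finite chain of sets [n] = I_0 ⊇ I_1 ⊋ I_2 ⊋ ... ⊋ I_m ⊋ I_{m+1} = ∅ and vectors w_0, w_1, ..., w_m such that for each j, w_j ∈ (∩_{i∈I_j} W_i) \ (∩_{i∈I_j} V_i) and I_{j+1} = { i ∈ I_j : w_j ∈ V_i }. -/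
open Module

/-- the chain construction in the proof of Proposition `set`. Given subspaces
`Vᵢ ⊂ Wᵢ` with `dim Wᵢ = dim Vᵢ + 1`, `⋂ᵢ Vᵢ = 0`, and `⋂_{i∈I} Wᵢ ⊋ ⋂_{i∈I} Vᵢ` for every
nonempty `I ⊆ [n]`, there is a chain `[n] = I₀ ⊇ I₁ ⊋ I₂ ⊋ ⋯ ⊋ I_{m+1} = ∅` and vectors
`w₀,…,w_m` with `w_j ∈ (⋂_{i∈I_j} Wᵢ) \ (⋂_{i∈I_j} Vᵢ)` and
`I_{j+1} = {i ∈ I_j : w_j ∈ Vᵢ}`. -/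
theorem exists_chain_of_strict_intersections
    {K V : Type*} [Field K] [IsAlgClosed K] [AddCommGroup V] [Module K V]
    [FiniteDimensional K V] {n : ℕ} (hn : 0 < n)
    (Vs Ws : Fin n → Submodule K V)
    (hle : ∀ i, Vs i ≤ Ws i)
    (hdim : ∀ i, finrank K ↥(Ws i) = finrank K ↥(Vs i) + 1)
    (hbot : (⨅ i, Vs i) = ⊥)
    (hstrict : ∀ I : Finset (Fin n), I.Nonempty → (⨅ i ∈ I, Vs i) < (⨅ i ∈ I, Ws i)) :
    ∃ (m : ℕ) (I : ℕ → Finset (Fin n)) (w : ℕ → V),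
      I 0 = Finset.univ ∧
      I (m + 1) = ∅ ∧
      I 1 ⊆ I 0 ∧
      (∀ j, 1 ≤ j → j ≤ m → I (j + 1) ⊂ I j) ∧
      (∀ j ≤ m, w j ∈ (⨅ i ∈ I j, Ws i) ∧ w j ∉ (⨅ i ∈ I j, Vs i)) ∧
      (∀ j ≤ m, ∀ i, i ∈ I (j + 1) ↔ i ∈ I j ∧ w j ∈ Vs i) := by
  classical
  have hw : ∀ I : Finset (Fin n), I.Nonempty →
      ∃ x : V, x ∈ (⨅ i ∈ I, Ws i) ∧ x ∉ (⨅ i ∈ I, Vs i) := by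
    intro I hI
    obtain ⟨x, hx1, hx2⟩ := SetLike.exists_of_lt (hstrict I hI)
    exact ⟨x, hx1, hx2⟩
  choose! wfun hwW hwV using hw
  set f : Finset (Fin n) → Finset (Fin n) :=
    fun I => I.filter (fun i => wfun I ∈ Vs i) with hf
  set Iseq : ℕ → Finset (Fin n) := fun k => f^[k] Finset.univ with hIseq
  have hIsucc : ∀ k, Iseq (k + 1) = f (Iseq k) := by
    intro k
    simp [hIseq, Function.iterate_succ_apply' f k]
  have hI0 : Iseq 0 = Finset.univ := rfl
  -- strict decrease on nonempty
  have hstep : ∀ k, (Iseq k).Nonempty → Iseq (k + 1) ⊂ Iseq k := by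
    intro k hk
    rw [hIsucc k]
    refine Finset.ssubset_iff_of_subset (Finset.filter_subset _ _) |>.mpr ?_
    have := hwV _ hk
    rw [Submodule.mem_iInf] at this
    push_neg at this
    obtain ⟨i, hi⟩ := this
    rw [Submodule.mem_iInf] at hi
    push_neg at hi
    obtain ⟨hiI, hiV⟩ := hi
    exact ⟨i, hiI, by simp [hf, hiI, hiV]⟩
  have hempty_step : ∀ k, Iseq k = ∅ → Iseq (k + 1) = ∅ := by
    intro k hk
    rw [hIsucc k, hk]
    simp [hf]
  -- termination
  have hcard : ∀ k, Iseq k = ∅ ∨ (Iseq k).card + k ≤ n := by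
    intro k
    induction k with
    | zero => right; rw [hI0]; simp
    | succ k ih =>
      rcases ih with h | h
      · left; exact hempty_step k h
      · rcases Finset.eq_empty_or_nonempty (Iseq k) with he | hne
        · left; exact hempty_step k he
        · right
          have := Finset.card_lt_card (hstep k hne)
          omega
  have hterm : ∃ k, Iseq (k + 1) = ∅ := by
    refine ⟨n, ?_⟩
    rcases hcard (n + 1) with h | h
    · exact h
    · rcases Finset.eq_empty_or_nonempty (Iseq (n + 1)) with he | hne
      · exact he
      · have := Finset.card_pos.mpr hne
        omega
  set m := Nat.find hterm with hm
  have hmE : Iseq (m + 1) = ∅ := Nat.find_spec hterm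
  have hne : ∀ j ≤ m, (Iseq j).Nonempty := by
    intro j hj
    rcases Nat.eq_zero_or_pos j with rfl | hjpos
    · rw [hI0]; exact Finset.univ_nonempty_iff.mpr ⟨⟨0, hn⟩⟩
    · obtain ⟨j', rfl⟩ := Nat.exists_eq_succ_of_ne_zero (Nat.pos_iff_ne_zero.mp hjpos)
      have : ¬ Iseq (j' + 1) = ∅ := Nat.find_min hterm (by omega)
      exact Finset.nonempty_iff_ne_empty.mpr this
  refine ⟨m, Iseq, fun j => wfun (Iseq j), hI0, hmE, ?_, ?_, ?_, ?_⟩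
  · rw [hIsucc 0]; exact Finset.filter_subset _ _
  · intro j h1 h2
    exact hstep j (hne j h2)
  · intro j hj
    exact ⟨hwW _ (hne j hj), hwV _ (hne j hj)⟩
  · intro j hj i
    rw [hIsucc j]
    simp [hf]
end

section
/- Let d : 2^{[n]} → ℤ be the rank-type function d_I = dim(∩_{i∈I} V_i) for subspaces V_1,...,V_n of an (r+1)-dimensional vector space V (with d_∅ = r+1). Fix (m_1,...,m_n) ∈ ℤ^n_{≥0} satisfying r+1 − Σ_{i∈I} m_i > d_I for all I ⊆ [n]. For h ∈ [n], let S_h = { I ⊆ [n] : h ∈ I and r+1 − Σ_{i∈I} m_i = d_I + 1 }. If I_1, I_2 ∈ S_h are both maximal under inclusion in S_h, then I_1 = I_2; i.e., S_h has at most one maximal element, and if I_1, I_2 ∈ S_h then I_1 ∪ I_2 ∈ S_h. -/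
open Module

/-- with `d_I = dim (⋂_{i∈I} Vᵢ)` and `(m₁,…,m_n)` satisfying
`r+1 - ∑_{i∈I} mᵢ > d_I` for all (nonempty) `I`, the collection
`S_h = {I ∋ h : r+1 - ∑_{i∈I} mᵢ = d_I + 1}` is closed under unions; in particular any two
maximal elements of `S_h` coincide. -/
theorem S_h_union_closed_and_unique_maximal
    {K V : Type*} [Field K] [AddCommGroup V] [Module K V] [FiniteDimensional K V]
    (r n : ℕ) (hV : finrank K V = r + 1) (Vs : Fin n → Submodule K V)
    (m : Fin n → ℕ)
    (hm : ∀ I : Finset (Fin n), I.Nonempty →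
      ∑ i ∈ I, m i + finrank K ↥(⨅ i ∈ I, Vs i) < r + 1)
    (h : Fin n) (I₁ I₂ : Finset (Fin n))
    (h₁ : h ∈ I₁) (h₂ : h ∈ I₂)
    (e₁ : ∑ i ∈ I₁, m i + finrank K ↥(⨅ i ∈ I₁, Vs i) + 1 = r + 1)
    (e₂ : ∑ i ∈ I₂, m i + finrank K ↥(⨅ i ∈ I₂, Vs i) + 1 = r + 1) :
    (∑ i ∈ I₁ ∪ I₂, m i + finrank K ↥(⨅ i ∈ I₁ ∪ I₂, Vs i) + 1 = r + 1) ∧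
    ((∀ J : Finset (Fin n), h ∈ J →
        ∑ i ∈ J, m i + finrank K ↥(⨅ i ∈ J, Vs i) + 1 = r + 1 → I₁ ⊆ J → I₁ = J) →
     (∀ J : Finset (Fin n), h ∈ J →
        ∑ i ∈ J, m i + finrank K ↥(⨅ i ∈ J, Vs i) + 1 = r + 1 → I₂ ⊆ J → I₂ = J) →
     I₁ = I₂) := by
  set A := ⨅ i ∈ I₁, Vs i with hA
  set B := ⨅ i ∈ I₂, Vs i with hB
  have hU : (⨅ i ∈ I₁ ∪ I₂, Vs i) = A ⊓ B := by
    rw [hA, hB, Finset.iInf_union]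
  have hsub : A ⊔ B ≤ ⨅ i ∈ I₁ ∩ I₂, Vs i := by
    simp only [le_iInf_iff]
    intro i hi
    rw [Finset.mem_inter] at hi
    exact sup_le (biInf_le _ hi.1) (biInf_le _ hi.2)
  have hdim : finrank K ↥(A ⊔ B) ≤ finrank K ↥(⨅ i ∈ I₁ ∩ I₂, Vs i) :=
    Submodule.finrank_mono hsub
  have hmod : finrank K ↥(A ⊓ B) + finrank K ↥(A ⊔ B)
      = finrank K ↥A + finrank K ↥B := by
    have := Submodule.finrank_sup_add_finrank_inf_eq A B
    omega
  have hsum : ∑ i ∈ I₁ ∪ I₂, m i + ∑ i ∈ I₁ ∩ I₂, m i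
      = ∑ i ∈ I₁, m i + ∑ i ∈ I₂, m i := Finset.sum_union_inter
  have hint : ∑ i ∈ I₁ ∩ I₂, m i + finrank K ↥(⨅ i ∈ I₁ ∩ I₂, Vs i) < r + 1 :=
    hm _ ⟨h, Finset.mem_inter.2 ⟨h₁, h₂⟩⟩
  have hun : ∑ i ∈ I₁ ∪ I₂, m i + finrank K ↥(⨅ i ∈ I₁ ∪ I₂, Vs i) < r + 1 :=
    hm _ ⟨h, Finset.mem_union_left _ h₁⟩
  have key : ∑ i ∈ I₁ ∪ I₂, m i + finrank K ↥(⨅ i ∈ I₁ ∪ I₂, Vs i) + 1 = r + 1 := by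
    rw [hU] at hun ⊢
    omega
  refine ⟨key, fun max₁ max₂ => ?_⟩
  have hu1 : I₁ = I₁ ∪ I₂ :=
    max₁ _ (Finset.mem_union_left _ h₁) key Finset.subset_union_left
  have hu2 : I₂ = I₁ ∪ I₂ :=
    max₂ _ (Finset.mem_union_left _ h₁) key Finset.subset_union_right
  exact hu1.trans hu2.symm
end

section
/- Let (m_1,...,m_n) ∈ M̂ (i.e., for every k there is a set I_k containing k with r+1 − Σ_{i∈I_k} m_i = d_{I_k} + 1, and r+1−Σ_{i∈I}m_i > d_I for all I). Denote by I_{m_h} the unique maximal element of S_{m_h} = {I ∋ h : r+1 − Σ_{i∈I}m_i = d_I + 1}. Then: (i) I_{m_h} = I_{m_j} whenever j ∈ I_{m_h}; (ii) I_{m_h} ∩ I_{m_j} = ∅ whenever j ∉ I_{m_h}. In particular [n] decomposes as a disjoint union of the sets I_{m_h}. -/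
open Module

theorem union_in_S
    {K V : Type*} [Field K] [AddCommGroup V] [Module K V] [FiniteDimensional K V]
    (r n : ℕ) (Vs : Fin n → Submodule K V) (m : Fin n → ℕ)
    (hm : ∀ I : Finset (Fin n), I.Nonempty →
      ∑ i ∈ I, m i + finrank K ↥(⨅ i ∈ I, Vs i) < r + 1)
    {I J : Finset (Fin n)} (hIJ : (I ∩ J).Nonempty)
    (hI : ∑ i ∈ I, m i + finrank K ↥(⨅ i ∈ I, Vs i) + 1 = r + 1)
    (hJ : ∑ i ∈ J, m i + finrank K ↥(⨅ i ∈ J, Vs i) + 1 = r + 1) :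
    ∑ i ∈ I ∪ J, m i + finrank K ↥(⨅ i ∈ I ∪ J, Vs i) + 1 = r + 1 := by
  set A := ⨅ i ∈ I, Vs i with hA
  set B := ⨅ i ∈ J, Vs i with hB
  have hunion : (⨅ i ∈ I ∪ J, Vs i) = A ⊓ B := by
    rw [hA, hB]
    simp only [← Finset.inf_eq_iInf, Finset.inf_union]
  have hsup : A ⊔ B ≤ ⨅ i ∈ I ∩ J, Vs i := by
    apply sup_le
    · exact le_iInf fun i => le_iInf fun hi =>
        iInf_le_of_le i (iInf_le _ (Finset.mem_of_mem_inter_left hi))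
    · exact le_iInf fun i => le_iInf fun hi =>
        iInf_le_of_le i (iInf_le _ (Finset.mem_of_mem_inter_right hi))
  have hmono : finrank K ↥(A ⊔ B) ≤ finrank K ↥(⨅ i ∈ I ∩ J, Vs i) :=
    Submodule.finrank_mono hsup
  have hdim : finrank K ↥(A ⊔ B) + finrank K ↥(A ⊓ B) =
      finrank K ↥A + finrank K ↥B := Submodule.finrank_sup_add_finrank_inf_eq A B
  have hinter := hm (I ∩ J) hIJ
  have hsum : ∑ i ∈ I ∪ J, m i + ∑ i ∈ I ∩ J, m i = ∑ i ∈ I, m i + ∑ i ∈ J, m i :=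
    Finset.sum_union_inter
  have hle := hm (I ∪ J) (hIJ.mono (Finset.inter_subset_left.trans Finset.subset_union_left))
  rw [hunion] at hle ⊢
  omega

/-- let `(m₁,…,m_n)` satisfy `r+1 - ∑_{i∈I} mᵢ > d_I` for all nonempty `I`, and
suppose each index `h` lies in some `I` with equality `r+1 - ∑_{i∈I} mᵢ = d_I + 1`.  Let
`Im h` be the (unique) maximal — indeed greatest — element of
`S_h = {I ∋ h : r+1 - ∑_{i∈I} mᵢ = d_I + 1}`.  Then (i) `Im h = Im j` whenever `j ∈ Im h`,
and (ii) `Im h ∩ Im j = ∅` whenever `j ∉ Im h`; so `[n]` is the disjoint union of the `Im h`. -/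
theorem Im_partition
    {K V : Type*} [Field K] [AddCommGroup V] [Module K V] [FiniteDimensional K V]
    (r n : ℕ) (hV : finrank K V = r + 1) (Vs : Fin n → Submodule K V)
    (m : Fin n → ℕ)
    (hm : ∀ I : Finset (Fin n), I.Nonempty →
      ∑ i ∈ I, m i + finrank K ↥(⨅ i ∈ I, Vs i) < r + 1)
    (Im : Fin n → Finset (Fin n))
    (hmem : ∀ h, h ∈ Im h)
    (heq : ∀ h, ∑ i ∈ Im h, m i + finrank K ↥(⨅ i ∈ Im h, Vs i) + 1 = r + 1)
    (hmax : ∀ h, ∀ J : Finset (Fin n), h ∈ J →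
      ∑ i ∈ J, m i + finrank K ↥(⨅ i ∈ J, Vs i) + 1 = r + 1 → J ⊆ Im h) :
    (∀ h j, j ∈ Im h → Im h = Im j) ∧
    (∀ h j, j ∉ Im h → Im h ∩ Im j = ∅) := by
  have key : ∀ h j, (Im h ∩ Im j).Nonempty → Im h = Im j := by
    intro h j hne
    have hu := union_in_S r n Vs m hm hne (heq h) (heq j)
    have h1 : Im h ∪ Im j ⊆ Im h :=
      hmax h _ (Finset.mem_union_left _ (hmem h)) hu
    have h2 : Im h ∪ Im j ⊆ Im j :=
      hmax j _ (Finset.mem_union_right _ (hmem j)) hu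
    exact Finset.Subset.antisymm
      ((Finset.subset_union_left).trans h2)
      ((Finset.subset_union_right).trans h1)
  constructor
  · intro h j hj
    exact key h j ⟨j, Finset.mem_inter.mpr ⟨hj, hmem j⟩⟩
  · intro h j hj
    by_contra hne
    have : (Im h ∩ Im j).Nonempty := Finset.nonempty_iff_ne_empty.mpr hne
    exact hj ((key h j this) ▸ hmem j)
end

section
/- Let I_1, ..., I_{n-1}, I_n be ideals in a polynomial ring k[x_1,...,x_N], each generated by a subset of the variables. Then (I_1 ∩ I_2 ∩ ... ∩ I_{n-1}) + I_n = ((I_1 + I_n) ∩ I_2 ∩ ... ∩ I_{n-1}) + I_n. -/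
open MvPolynomial

/-- Lemma `monomial property`: for ideals `I₁, I₂, …, I_{n-1}, I_n` of a
polynomial ring each generated by a subset of the variables,
`(I₁ ∩ ⋯ ∩ I_{n-1}) + I_n = ((I₁ + I_n) ∩ I₂ ∩ ⋯ ∩ I_{n-1}) + I_n`.
Here `I₂,…,I_{n-1}` are encoded as a family over `Fin m`. -/
theorem degree_one_monomial_ideal_sum_inter
    {k : Type*} [Field k] (N m : ℕ)
    (S₁ Sₙ : Set (Fin N)) (S : Fin m → Set (Fin N)) :
    (Ideal.span (X '' S₁ : Set (MvPolynomial (Fin N) k)) ⊓ ⨅ j, Ideal.span (X '' S j))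
        ⊔ Ideal.span (X '' Sₙ)
      = ((Ideal.span (X '' S₁) ⊔ Ideal.span (X '' Sₙ)) ⊓ ⨅ j, Ideal.span (X '' S j))
        ⊔ Ideal.span (X '' Sₙ) := by
  classical
  refine le_antisymm (sup_le_sup_right (inf_le_inf_right _ le_sup_left) _) ?_
  refine sup_le ?_ le_sup_right
  intro p hp
  obtain ⟨hp1, hpJ⟩ := hp
  rw [SetLike.mem_coe] at hp1 hpJ
  rw [← Ideal.span_union, ← Set.image_union, mem_ideal_span_X_image] at hp1
  set t := p.support.filter (fun μ => ∃ i ∈ Sₙ, μ i ≠ 0) with ht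
  have hsplit : p = (∑ μ ∈ p.support \ t, monomial μ (p.coeff μ))
      + (∑ μ ∈ t, monomial μ (p.coeff μ)) := by
    rw [Finset.sum_sdiff (Finset.filter_subset _ _)]
    exact (support_sum_monomial_coeff p).symm
  have hmono : ∀ (u : Finset (Fin N →₀ ℕ)) (T : Set (Fin N)),
      (∀ μ ∈ u, ∃ i ∈ T, μ i ≠ 0) →
      (∑ μ ∈ u, monomial μ (p.coeff μ)) ∈
        Ideal.span (X '' T : Set (MvPolynomial (Fin N) k)) := by
    intro u T h
    refine Ideal.sum_mem _ fun μ hμ => ?_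
    rw [mem_ideal_span_X_image]
    intro ν hν
    rw [support_monomial] at hν
    split_ifs at hν with hc
    · simp at hν
    · simp only [Finset.mem_singleton] at hν
      exact hν ▸ h μ hμ
  rw [hsplit]
  refine Submodule.add_mem_sup ⟨?_, ?_⟩ ?_
  · refine hmono _ _ fun μ hμ => ?_
    rw [Finset.mem_sdiff, ht, Finset.mem_filter] at hμ
    obtain ⟨hμs, hμt⟩ := hμ
    obtain ⟨i, hi, hine⟩ := hp1 μ hμs
    rcases hi with hi | hi
    · exact ⟨i, hi, hine⟩
    · exact absurd ⟨hμs, i, hi, hine⟩ hμt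
  · rw [SetLike.mem_coe, Ideal.mem_iInf]
    intro j
    refine hmono _ _ fun μ hμ => ?_
    have := Ideal.mem_iInf.mp hpJ j
    rw [mem_ideal_span_X_image] at this
    exact this μ (Finset.mem_sdiff.mp hμ).1
  · exact hmono _ _ fun μ hμ => (Finset.mem_filter.mp hμ).2
end

section
/- Let I_1 be an ideal generated by a set of variables, and J an arbitrary monomial ideal, in a polynomial ring k[x_1,...,x_N]. If I_1 = A + B where A and B are also generated by sets of variables, then I_1 ∩ J = (A ∩ J) + (B ∩ J). More generally, for two variable-generated ideals I, I' and a monomial ideal J: (I + I') ∩ J = (I ∩ J) + (I' ∩ J). -/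
open MvPolynomial

lemma image_X_eq_monomial_image {k : Type*} [Field k] {N : ℕ} (A : Set (Fin N)) :
    (X '' A : Set (MvPolynomial (Fin N) k)) =
      (fun s => monomial s (1:k)) '' ((fun i : Fin N => Finsupp.single i 1) '' A) := by
  rw [Set.image_image]
  rfl

/-- for ideals `I`, `I'` generated by sets of variables and a monomial ideal `J`
in `k[x₁,…,x_N]`, we have `(I + I') ∩ J = (I ∩ J) + (I' ∩ J)`. -/
theorem variable_ideal_sum_inter_monomial
    {k : Type*} [Field k] (N : ℕ)
    (A B : Set (Fin N)) (J : Ideal (MvPolynomial (Fin N) k))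
    (hJ : ∃ M : Set (MvPolynomial (Fin N) k),
      (∀ q ∈ M, ∃ s : Fin N →₀ ℕ, q = monomial s 1) ∧ J = Ideal.span M) :
    (Ideal.span (X '' A : Set (MvPolynomial (Fin N) k)) ⊔ Ideal.span (X '' B)) ⊓ J
      = (Ideal.span (X '' A) ⊓ J) ⊔ (Ideal.span (X '' B) ⊓ J) := by
  classical
  obtain ⟨M, hM, rfl⟩ := hJ
  obtain ⟨S, rfl⟩ : ∃ S : Set (Fin N →₀ ℕ), M = (fun s => monomial s (1:k)) '' S := by
    refine ⟨{s | monomial s (1:k) ∈ M}, ?_⟩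
    ext q
    constructor
    · intro hq
      obtain ⟨s, rfl⟩ := hM q hq
      exact ⟨s, hq, rfl⟩
    · rintro ⟨s, hs, rfl⟩; exact hs
  refine le_antisymm ?_ (sup_le (inf_le_inf le_sup_left le_rfl)
    (inf_le_inf le_sup_right le_rfl))
  intro f hf
  obtain ⟨hf1, hf2⟩ := Ideal.mem_inf.mp hf
  rw [← Ideal.span_union, ← Set.image_union, image_X_eq_monomial_image,
    mem_ideal_span_monomial_image] at hf1
  rw [mem_ideal_span_monomial_image] at hf2
  set p : (Fin N →₀ ℕ) → Prop := fun d => ∃ i ∈ A, Finsupp.single i 1 ≤ d with hp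
  set fA : MvPolynomial (Fin N) k :=
    ∑ d ∈ f.support.filter p, monomial d (coeff d f) with hfA
  set fB : MvPolynomial (Fin N) k :=
    ∑ d ∈ f.support.filter (fun d => ¬ p d), monomial d (coeff d f) with hfB
  have hsum : fA + fB = f := by
    rw [hfA, hfB, Finset.sum_filter_add_sum_filter_not]
    exact f.support_sum_monomial_coeff
  have hcA : ∀ e, coeff e fA = if e ∈ f.support.filter p then coeff e f else 0 := by
    intro e
    rw [hfA, coeff_sum]
    simp [coeff_monomial, Finset.sum_ite_eq']
  have hcB : ∀ e, coeff e fB =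
      if e ∈ f.support.filter (fun d => ¬ p d) then coeff e f else 0 := by
    intro e
    rw [hfB, coeff_sum]
    simp [coeff_monomial, Finset.sum_ite_eq']
  have hsuppA : ∀ d ∈ fA.support, d ∈ f.support ∧ p d := by
    intro d hd
    rw [mem_support_iff, hcA d] at hd
    by_cases h : d ∈ f.support.filter p
    · exact ⟨(Finset.mem_filter.mp h).1, (Finset.mem_filter.mp h).2⟩
    · simp [h] at hd
  have hsuppB : ∀ d ∈ fB.support, d ∈ f.support ∧ ¬ p d := by
    intro d hd
    rw [mem_support_iff, hcB d] at hd
    by_cases h : d ∈ f.support.filter (fun d => ¬ p d)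
    · exact ⟨(Finset.mem_filter.mp h).1, (Finset.mem_filter.mp h).2⟩
    · simp [h] at hd
  have hAmem : fA ∈ Ideal.span (X '' A : Set (MvPolynomial (Fin N) k)) := by
    rw [image_X_eq_monomial_image, mem_ideal_span_monomial_image]
    intro d hd
    obtain ⟨i, hiA, hle⟩ := (hsuppA d hd).2
    exact ⟨Finsupp.single i 1, ⟨i, hiA, rfl⟩, hle⟩
  have hAJ : fA ∈ Ideal.span ((fun s => monomial s (1:k)) '' S) := by
    rw [mem_ideal_span_monomial_image]
    intro d hd
    exact hf2 d (hsuppA d hd).1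
  have hBmem : fB ∈ Ideal.span (X '' B : Set (MvPolynomial (Fin N) k)) := by
    rw [image_X_eq_monomial_image, mem_ideal_span_monomial_image]
    intro d hd
    obtain ⟨hdf, hnp⟩ := hsuppB d hd
    obtain ⟨s, ⟨i, hiAB, rfl⟩, hle⟩ := hf1 d hdf
    rcases hiAB with hiA | hiB
    · exact absurd ⟨i, hiA, hle⟩ hnp
    · exact ⟨Finsupp.single i 1, ⟨i, hiB, rfl⟩, hle⟩
  have hBJ : fB ∈ Ideal.span ((fun s => monomial s (1:k)) '' S) := by
    rw [mem_ideal_span_monomial_image]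
    intro d hd
    exact hf2 d (hsuppB d hd).1
  rw [← hsum]
  exact Ideal.add_mem _
    (Ideal.mem_sup_left (Ideal.mem_inf.mpr ⟨hAmem, hAJ⟩))
    (Ideal.mem_sup_right (Ideal.mem_inf.mpr ⟨hBmem, hBJ⟩))
end

section
/- With the notation of the previous statement: if a monomial x_{1,ℓ_1}⋯x_{n,ℓ_n} satisfies r+1 − Σ_{i∈I}(r+1−d_i−ℓ_i) > d_I for every I ⊆ [n], then there exists (m_1,...,m_n) ∈ M(p) with ℓ_i > r−d_i−m_i for all i, and consequently the monomial is not in I_o = ∩_{m∈M(p)} P_m. -/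
open Module MvPolynomial

/-- The coordinate-subspace prime `P_m` associated to an integer vector `m`: it is generated by
the variables `x_{i,j}` with `1 ≤ j ≤ r - dᵢ - mᵢ` (here `j : Fin (r+1-dᵢ)` encodes the
variable `x_{i,j+1}`). -/
noncomputable def primeP {K V : Type*} [Field K] [AddCommGroup V] [Module K V]
    [FiniteDimensional K V] (k : Type*) [Field k] (r n : ℕ) (Vs : Fin n → Submodule K V)
    (m : Fin n → ℕ) :
    Ideal (MvPolynomial ((i : Fin n) × Fin (r + 1 - finrank K ↥(Vs i))) k) :=
  Ideal.span { q | ∃ (i : Fin n) (j : Fin (r + 1 - finrank K ↥(Vs i))),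
    (j : ℕ) + 1 ≤ r - finrank K ↥(Vs i) - m i ∧ q = X ⟨i, j⟩ }

/-- The set `M(h)` of constraint vectors of sum `h`. -/
def Mset {K V : Type*} [Field K] [AddCommGroup V] [Module K V] [FiniteDimensional K V]
    (r n : ℕ) (Vs : Fin n → Submodule K V) (h : ℕ) : Set (Fin n → ℕ) :=
  { m | ∑ i, m i = h ∧ ∀ I : Finset (Fin n), I.Nonempty →
      ∑ i ∈ I, m i + finrank K ↥(⨅ i ∈ I, Vs i) < r + 1 }

/-- The numeric value `ℓᵢ ∈ {0,…,r+1-dᵢ}` of a choice `ℓ i : Option (Fin (r+1-dᵢ))`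
(`none` means `ℓᵢ = 0`, `some j` means `ℓᵢ = j+1`). -/
def lval {K V : Type*} [Field K] [AddCommGroup V] [Module K V] [FiniteDimensional K V]
    {r n : ℕ} {Vs : Fin n → Submodule K V}
    (ℓ : (i : Fin n) → Option (Fin (r + 1 - finrank K ↥(Vs i)))) (i : Fin n) : ℕ :=
  (ℓ i).elim 0 (fun j => (j : ℕ) + 1)

private lemma sum_update_add {n : ℕ} (m : Fin n → ℕ) (i : Fin n) (I : Finset (Fin n)) :
    ∑ j ∈ I, Function.update m i (m i + 1) j
      = ∑ j ∈ I, m j + (if i ∈ I then 1 else 0) := by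
  have h : ∀ j, Function.update m i (m i + 1) j = m j + (if j = i then 1 else 0) := by
    intro j
    rcases eq_or_ne j i with rfl | hj
    · simp
    · simp [Function.update_of_ne hj, hj]
  rw [Finset.sum_congr rfl fun j _ => h j, Finset.sum_add_distrib,
    Finset.sum_ite_eq' I i fun _ => 1]

private lemma tight_union {n r : ℕ} (d : Finset (Fin n) → ℕ) (m : Fin n → ℕ)
    (hfeas : ∀ I : Finset (Fin n), I.Nonempty → ∑ j ∈ I, m j + d I ≤ r)
    (hsub : ∀ I J : Finset (Fin n), (I ∩ J).Nonempty → d I + d J ≤ d (I ∪ J) + d (I ∩ J))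
    {I J : Finset (Fin n)} (hIJ : (I ∩ J).Nonempty)
    (hI : ∑ i ∈ I, m i + d I = r) (hJ : ∑ i ∈ J, m i + d J = r) :
    ∑ i ∈ (I ∪ J), m i + d (I ∪ J) = r := by
  have hUne : (I ∪ J).Nonempty := by
    obtain ⟨x, hx⟩ := hIJ
    exact ⟨x, Finset.mem_union_left _ (Finset.mem_inter.mp hx).1⟩
  have h1 := hfeas (I ∪ J) hUne
  have h2 := hfeas (I ∩ J) hIJ
  have h3 := hsub I J hIJ
  have h4 : ∑ i ∈ (I ∪ J), m i + ∑ i ∈ (I ∩ J), m i = ∑ i ∈ I, m i + ∑ i ∈ J, m i :=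
    Finset.sum_union_inter
  omega

private lemma tight_sup {n r : ℕ} (d : Finset (Fin n) → ℕ) (m : Fin n → ℕ)
    (hfeas : ∀ I : Finset (Fin n), I.Nonempty → ∑ j ∈ I, m j + d I ≤ r)
    (hsub : ∀ I J : Finset (Fin n), (I ∩ J).Nonempty → d I + d J ≤ d (I ∪ J) + d (I ∩ J))
    (i : Fin n) (F : Finset (Finset (Fin n))) (hne : F.Nonempty)
    (hall : ∀ A ∈ F, i ∈ A ∧ ∑ j ∈ A, m j + d A = r) :
    i ∈ F.sup id ∧ ∑ j ∈ F.sup id, m j + d (F.sup id) = r := by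
  induction hne using Finset.Nonempty.cons_induction with
  | singleton A => simpa using hall A (Finset.mem_singleton_self A)
  | cons A F hA hne ih =>
    have hA' := hall A (Finset.mem_cons_self A F)
    have ih' := ih fun B hB => hall B (Finset.mem_cons_of_mem hB)
    rw [Finset.sup_cons]
    have hsupeq : (id A : Finset (Fin n)) ⊔ F.sup id = A ∪ F.sup id := rfl
    rw [hsupeq]
    refine ⟨Finset.mem_union_left _ hA'.1, ?_⟩
    exact tight_union d m hfeas hsub
      ⟨i, Finset.mem_inter.mpr ⟨hA'.1, ih'.1⟩⟩ hA'.2 ih'.2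

private lemma exists_incr {n r p : ℕ} (d : Finset (Fin n) → ℕ)
    (hsub : ∀ I J : Finset (Fin n), (I ∩ J).Nonempty → d I + d J ≤ d (I ∪ J) + d (I ∩ J))
    (m m' : Fin n → ℕ)
    (hfeas : ∀ I : Finset (Fin n), I.Nonempty → ∑ j ∈ I, m j + d I ≤ r)
    (hfeas' : ∀ I : Finset (Fin n), I.Nonempty → ∑ j ∈ I, m' j + d I ≤ r)
    (hsum' : ∑ i, m' i = p) (hlt : ∑ i, m i < p) :
    ∃ i, ∀ I : Finset (Fin n), I.Nonempty →
      ∑ j ∈ I, Function.update m i (m i + 1) j + d I ≤ r := by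
  classical
  by_contra hcon
  push_neg at hcon
  have htight : ∀ i : Fin n, ∃ I : Finset (Fin n), i ∈ I ∧ ∑ j ∈ I, m j + d I = r := by
    intro i
    obtain ⟨I, hIne, hIgt⟩ := hcon i
    rw [sum_update_add] at hIgt
    have hle := hfeas I hIne
    by_cases hiI : i ∈ I
    · refine ⟨I, hiI, ?_⟩
      simp only [hiI, if_true] at hIgt
      omega
    · simp only [hiI, if_false] at hIgt
      omega
  set J : Fin n → Finset (Fin n) :=
    fun i => (Finset.univ.filter
      (fun I : Finset (Fin n) => i ∈ I ∧ ∑ j ∈ I, m j + d I = r)).sup id with hJdef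
  have hJ : ∀ i, i ∈ J i ∧ ∑ j ∈ J i, m j + d (J i) = r := by
    intro i
    obtain ⟨I₀, hI₀⟩ := htight i
    have hF : (Finset.univ.filter
        (fun I : Finset (Fin n) => i ∈ I ∧ ∑ j ∈ I, m j + d I = r)).Nonempty :=
      ⟨I₀, Finset.mem_filter.mpr ⟨Finset.mem_univ _, hI₀⟩⟩
    simp only [hJdef]
    exact tight_sup d m hfeas hsub i _ hF (fun A hA => (Finset.mem_filter.mp hA).2)
  have hJsub : ∀ i i', i' ∈ J i → J i ⊆ J i' := by
    intro i i' h
    have h2 : J i ∈ Finset.univ.filter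
        (fun I : Finset (Fin n) => i' ∈ I ∧ ∑ j ∈ I, m j + d I = r) :=
      Finset.mem_filter.mpr ⟨Finset.mem_univ _, h, (hJ i).2⟩
    have h3 := Finset.le_sup (f := id) h2
    simp only [hJdef] at h3 ⊢
    exact h3
  have hJeq : ∀ i i', i' ∈ J i → J i' = J i := by
    intro i i' h
    exact Finset.Subset.antisymm (hJsub i' i ((hJsub i i' h) (hJ i).1)) (hJsub i i' h)
  set S := Finset.univ.image J with hS
  have hdisj : (S : Set (Finset (Fin n))).PairwiseDisjoint id := by
    intro A hA B hB hAB
    simp only [hS, Finset.coe_image, Set.mem_image] at hA hB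
    obtain ⟨a, -, rfl⟩ := hA
    obtain ⟨b, -, rfl⟩ := hB
    rw [Function.onFun, Finset.disjoint_left]
    intro x hxA hxB
    exact hAB ((hJeq a x hxA).symm.trans (hJeq b x hxB))
  have hcover : S.biUnion id = Finset.univ := by
    apply Finset.eq_univ_of_forall
    intro x
    exact Finset.mem_biUnion.mpr
      ⟨J x, Finset.mem_image_of_mem J (Finset.mem_univ x), (hJ x).1⟩
  have hkey : ∀ (f : Fin n → ℕ), ∑ i, f i = ∑ A ∈ S, ∑ j ∈ A, f j := by
    intro f
    rw [← hcover, Finset.sum_biUnion hdisj]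
    rfl
  have hle : ∀ A ∈ S, ∑ j ∈ A, m' j ≤ ∑ j ∈ A, m j := by
    intro A hA
    obtain ⟨a, -, rfl⟩ := Finset.mem_image.mp hA
    have h1 := hfeas' (J a) ⟨a, (hJ a).1⟩
    have h2 := (hJ a).2
    omega
  have : p ≤ ∑ i, m i := by
    rw [← hsum', hkey m', hkey m]
    exact Finset.sum_le_sum hle
  omega

private lemma exists_enlarge {n r p : ℕ} (d : Finset (Fin n) → ℕ)
    (hsub : ∀ I J : Finset (Fin n), (I ∩ J).Nonempty → d I + d J ≤ d (I ∪ J) + d (I ∩ J))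
    (m' : Fin n → ℕ)
    (hfeas' : ∀ I : Finset (Fin n), I.Nonempty → ∑ j ∈ I, m' j + d I ≤ r)
    (hsum' : ∑ i, m' i = p)
    (hbound : ∀ m : Fin n → ℕ,
      (∀ I : Finset (Fin n), I.Nonempty → ∑ j ∈ I, m j + d I ≤ r) → ∑ i, m i ≤ p) :
    ∀ (kk : ℕ) (m₀ : Fin n → ℕ),
      (∀ I : Finset (Fin n), I.Nonempty → ∑ j ∈ I, m₀ j + d I ≤ r) →
      p - ∑ i, m₀ i ≤ kk →
      ∃ m : Fin n → ℕ, (∀ i, m₀ i ≤ m i) ∧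
        (∀ I : Finset (Fin n), I.Nonempty → ∑ j ∈ I, m j + d I ≤ r) ∧ ∑ i, m i = p := by
  intro kk
  induction kk with
  | zero =>
    intro m₀ hf hk
    exact ⟨m₀, fun i => le_refl _, hf, by have := hbound m₀ hf; omega⟩
  | succ kk ih =>
    intro m₀ hf hk
    rcases eq_or_lt_of_le (hbound m₀ hf) with heq | hlt
    · exact ⟨m₀, fun i => le_refl _, hf, heq⟩
    · obtain ⟨i, hi⟩ := exists_incr d hsub m₀ m' hf hfeas' hsum' hlt
      have hsum : ∑ j, Function.update m₀ i (m₀ i + 1) j = ∑ j, m₀ j + 1 := by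
        rw [sum_update_add]; simp
      obtain ⟨m, h1, h2, h3⟩ := ih (Function.update m₀ i (m₀ i + 1)) hi (by omega)
      refine ⟨m, fun j => le_trans ?_ (h1 j), h2, h3⟩
      rcases eq_or_ne j i with rfl | hj
      · simp
      · simp [Function.update_of_ne hj]

/-- Lemma `whyout`: if a square-free monomial `x_{1,ℓ₁} ⋯ x_{n,ℓ_n}` satisfies
`r+1 - ∑_{i∈I} (r+1-dᵢ-ℓᵢ) > d_I` for every nonempty `I ⊆ [n]`, then there is `m ∈ M(p)` with
`ℓᵢ > r-dᵢ-mᵢ` for all `i`, and consequently the monomial does not lie in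
`I_o = ⋂_{m ∈ M(p)} P_m`. -/
theorem monomial_not_mem_Io
    {K V : Type*} [Field K] [AddCommGroup V] [Module K V] [FiniteDimensional K V]
    (k : Type*) [Field k] (r n : ℕ) (hV : finrank K V = r + 1)
    (Vs : Fin n → Submodule K V) (hbot : (⨅ i, Vs i) = ⊥) (p : ℕ)
    (hpne : (Mset (K := K) r n Vs p).Nonempty)
    (hpmax : ∀ h : ℕ, (Mset (K := K) r n Vs h).Nonempty → h ≤ p)
    (ℓ : (i : Fin n) → Option (Fin (r + 1 - finrank K ↥(Vs i))))
    (hl : ∀ I : Finset (Fin n), I.Nonempty →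
      finrank K ↥(⨅ i ∈ I, Vs i) +
        ∑ i ∈ I, (r + 1 - finrank K ↥(Vs i) - lval (K := K) ℓ i) < r + 1) :
    ∃ m ∈ Mset (K := K) r n Vs p,
      (∀ i : Fin n, r - finrank K ↥(Vs i) - m i < lval (K := K) ℓ i) ∧
      (∏ i : Fin n, (ℓ i).elim 1 (fun j => (X ⟨i, j⟩ :
          MvPolynomial ((i' : Fin n) × Fin (r + 1 - finrank K ↥(Vs i'))) k)))
        ∉ ⨅ m' ∈ Mset (K := K) r n Vs p, primeP (K := K) k r n Vs m' := by
  classical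
  set d : Finset (Fin n) → ℕ := fun I => finrank K ↥(⨅ i ∈ I, Vs i) with hd
  have hsub : ∀ I J : Finset (Fin n), (I ∩ J).Nonempty →
      d I + d J ≤ d (I ∪ J) + d (I ∩ J) := by
    intro I J hIJ
    have hU : (⨅ i ∈ (I ∪ J : Finset (Fin n)), Vs i)
        = (⨅ i ∈ I, Vs i) ⊓ (⨅ i ∈ J, Vs i) := by
      rw [← Finset.inf_eq_iInf, ← Finset.inf_eq_iInf, ← Finset.inf_eq_iInf, Finset.inf_union]
    have hle : (⨅ i ∈ I, Vs i) ⊔ (⨅ i ∈ J, Vs i) ≤ ⨅ i ∈ (I ∩ J : Finset (Fin n)), Vs i := by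
      refine sup_le (le_iInf fun i => le_iInf fun hi => ?_)
        (le_iInf fun i => le_iInf fun hi => ?_)
      · exact iInf₂_le i (Finset.mem_inter.mp hi).1
      · exact iInf₂_le i (Finset.mem_inter.mp hi).2
    have hdim := Submodule.finrank_sup_add_finrank_inf_eq (⨅ i ∈ I, Vs i) (⨅ i ∈ J, Vs i)
    have hmono := Submodule.finrank_mono hle
    simp only [hd]
    rw [hU]
    omega
  obtain ⟨mh, hmhsum, hmhIneq⟩ := hpne
  have hfeas' : ∀ I : Finset (Fin n), I.Nonempty → ∑ j ∈ I, mh j + d I ≤ r := by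
    intro I hI
    have := hmhIneq I hI
    simp only [hd]
    omega
  have hsing : ∀ i : Fin n, (⨅ j ∈ ({i} : Finset (Fin n)), Vs j) = Vs i := by
    intro i
    rw [← Finset.inf_eq_iInf, Finset.inf_singleton]
  have hdile : ∀ i : Fin n, finrank K ↥(Vs i) ≤ r := by
    intro i
    have h := hmhIneq {i} ⟨i, Finset.mem_singleton_self i⟩
    rw [hsing i, Finset.sum_singleton] at h
    omega
  have hm₀feas : ∀ I : Finset (Fin n), I.Nonempty →
      ∑ j ∈ I, (r + 1 - finrank K ↥(Vs j) - lval (K := K) ℓ j) + d I ≤ r := by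
    intro I hI
    have := hl I hI
    simp only [hd]
    omega
  have hbound : ∀ m : Fin n → ℕ,
      (∀ I : Finset (Fin n), I.Nonempty → ∑ j ∈ I, m j + d I ≤ r) → ∑ i, m i ≤ p := by
    intro m hm
    refine hpmax (∑ i, m i) ⟨m, rfl, fun I hI => ?_⟩
    have := hm I hI
    simp only [hd] at this
    omega
  obtain ⟨m, hge, hfeas, hsum⟩ :=
    exists_enlarge d hsub mh hfeas' hmhsum hbound
      (p - ∑ i, (r + 1 - finrank K ↥(Vs i) - lval (K := K) ℓ i))
      (fun i => r + 1 - finrank K ↥(Vs i) - lval (K := K) ℓ i) hm₀feas le_rfl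
  have hmem : m ∈ Mset (K := K) r n Vs p := by
    refine ⟨hsum, fun I hI => ?_⟩
    have := hfeas I hI
    simp only [hd] at this
    omega
  have hlval : ∀ i, 1 ≤ lval (K := K) ℓ i := by
    intro i
    have h := hl {i} ⟨i, Finset.mem_singleton_self i⟩
    have hb := hdile i
    rw [hsing i, Finset.sum_singleton] at h
    omega
  have hlub : ∀ i, lval (K := K) ℓ i ≤ r + 1 - finrank K ↥(Vs i) := by
    intro i
    cases hℓ : ℓ i with
    | none => simp [lval, hℓ]
    | some j =>
      simp only [lval, hℓ, Option.elim]
      exact j.isLt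
  have hkey : ∀ i, r - finrank K ↥(Vs i) - m i < lval (K := K) ℓ i := by
    intro i
    have h1 : r + 1 - finrank K ↥(Vs i) - lval (K := K) ℓ i ≤ m i := hge i
    have h2 := hlval i
    have h3 := hlub i
    have h4 := hdile i
    omega
  refine ⟨m, hmem, hkey, ?_⟩
  intro hmem'
  have hP : (∏ i : Fin n, (ℓ i).elim 1 (fun j => (X ⟨i, j⟩ :
      MvPolynomial ((i' : Fin n) × Fin (r + 1 - finrank K ↥(Vs i'))) k)))
      ∈ primeP (K := K) k r n Vs m := by
    rw [Submodule.mem_iInf] at hmem'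
    have h := hmem' m
    rw [Submodule.mem_iInf] at h
    exact h hmem
  set x : ((i' : Fin n) × Fin (r + 1 - finrank K ↥(Vs i'))) → k :=
    fun s => if (s.2 : ℕ) + 1 ≤ r - finrank K ↥(Vs s.1) - m s.1 then 0 else 1 with hx
  have hker : ∀ q ∈ primeP (K := K) k r n Vs m, eval x q = 0 := by
    intro q hq
    have hle : primeP (K := K) k r n Vs m ≤ RingHom.ker (eval x) := by
      unfold primeP
      rw [Ideal.span_le]
      rintro q' ⟨i, j, hj, rfl⟩
      simp [RingHom.mem_ker, hx, hj]
      omega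
    exact hle hq
  have h1 : eval x (∏ i : Fin n, (ℓ i).elim 1 (fun j => (X ⟨i, j⟩ :
      MvPolynomial ((i' : Fin n) × Fin (r + 1 - finrank K ↥(Vs i'))) k))) = 1 := by
    rw [map_prod]
    refine Finset.prod_eq_one fun i _ => ?_
    cases hℓ : ℓ i with
    | none => simp
    | some j =>
      have hk := hkey i
      simp only [lval, hℓ, Option.elim] at hk
      simp only [Option.elim, eval_X, hx]
      rw [if_neg (by omega)]
  have h0 := hker _ hP
  rw [h1] at h0
  exact one_ne_zero h0
end

section
/- Let I_1,...,I_h be index sets with associated 'irredundant generator' condition: suppose a squarefree monomial x_{1,ℓ_1}⋯x_{n,ℓ_n} lies in I_o (i.e., some I ⊆ [n] satisfies r+1 − Σ_{i∈I}(r+1−d_i−ℓ_i) ≤ d_I). Then any minimal such I (minimal under inclusion among sets satisfying the inequality) satisfies |I| ≤ min{r+1, n}. -/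
open Module

/-- bound on the length of irredundant generators.  If the square-free monomial
determined by `ℓ` (with `1 ≤ ℓᵢ ≤ r+1-dᵢ` for `i ∈ I`) lies in `I_o` via a minimal witness
`I ⊆ [n]` — i.e. `r+1 - ∑_{i∈I}(r+1-dᵢ-ℓᵢ) ≤ d_I` while every nonempty proper subset `I'`
satisfies the strict reverse inequality — then `|I| ≤ min (r+1) n`. -/
theorem irredundant_generator_length_bound
    {K V : Type*} [Field K] [AddCommGroup V] [Module K V] [FiniteDimensional K V]
    (r n : ℕ) (hV : finrank K V = r + 1)
    (Vs : Fin n → Submodule K V) (I : Finset (Fin n)) (ℓ : Fin n → ℕ)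
    (hl : ∀ i ∈ I, 1 ≤ ℓ i ∧ ℓ i ≤ r + 1 - finrank K ↥(Vs i))
    (hI : r + 1 ≤ finrank K ↥(⨅ i ∈ I, Vs i) +
      ∑ i ∈ I, (r + 1 - finrank K ↥(Vs i) - ℓ i))
    (hmin : ∀ I' ⊂ I, I'.Nonempty →
      finrank K ↥(⨅ i ∈ I', Vs i) +
        ∑ i ∈ I', (r + 1 - finrank K ↥(Vs i) - ℓ i) < r + 1) :
    I.card ≤ min (r + 1) n := by
  have hn : I.card ≤ n := by
    simpa using Finset.card_le_univ I
  rw [Nat.le_min]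
  refine ⟨?_, hn⟩
  by_cases h2 : I.card ≤ 1
  · omega
  push_neg at h2
  -- each term is at least 1
  have key : ∀ j ∈ I, 1 ≤ r + 1 - finrank K ↥(Vs j) - ℓ j := by
    intro j hj
    have hss : I.erase j ⊂ I := Finset.erase_ssubset hj
    have hne : (I.erase j).Nonempty := by
      rw [← Finset.card_pos, Finset.card_erase_of_mem hj]; omega
    have h1 := hmin _ hss hne
    have hmono : finrank K ↥(⨅ i ∈ I, Vs i) ≤ finrank K ↥(⨅ i ∈ I.erase j, Vs i) :=
      Submodule.finrank_mono (biInf_mono fun i hi => Finset.erase_subset j I hi)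
    have hsum : ∑ i ∈ I.erase j, (r + 1 - finrank K ↥(Vs i) - ℓ i)
        + (r + 1 - finrank K ↥(Vs j) - ℓ j)
        = ∑ i ∈ I, (r + 1 - finrank K ↥(Vs i) - ℓ i) :=
      Finset.sum_erase_add _ _ hj
    omega
  obtain ⟨j, hj⟩ := Finset.card_pos.mp (by omega : 0 < I.card)
  have hss : I.erase j ⊂ I := Finset.erase_ssubset hj
  have hne : (I.erase j).Nonempty := by
    rw [← Finset.card_pos, Finset.card_erase_of_mem hj]; omega
  have h1 := hmin _ hss hne
  have hcard : (I.erase j).card ≤ ∑ i ∈ I.erase j, (r + 1 - finrank K ↥(Vs i) - ℓ i) := by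
    calc (I.erase j).card = ∑ i ∈ I.erase j, 1 := by simp
    _ ≤ _ := Finset.sum_le_sum fun i hi => key i (Finset.mem_of_mem_erase hi)
  have : (I.erase j).card = I.card - 1 := Finset.card_erase_of_mem hj
  omega
end
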